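/- Let N ≥ 2 and α ∈ (-1, 0), and consider the weighted isoperimetric ratio R(M) = (∫_{∂M ∩ ℝ^N_+} |x|^k x_N^α dH^{N-1}) / (∫_M |x|^ℓ x_N^α dx)^{(k+N+α-1)/(ℓ+N+α)} for measurable M ⊂ ℝ^N_+. If the translated balls Ω(t) = B₁(t, 0, …, 0) (centered on the x₁-axis) satisfy R(Ω(t)) → 0 as t → +∞ whenever k(N+α) < ℓ(N+α-1), then k(N+α) ≥ ℓ(N+α-1) is a necessary condition for existence of a minimizer of R among measurable subsets of ℝ^N_+ with positive finite weighted measure. Prove: if k(N+α) < ℓ(N+α-1), ℓ+N+α > 0, k+N+α > 0, then lim_{t→∞} R(Ω(t)) = 0. -/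

import Mathlib

open MeasureTheory Filter Topology

lemma aux_rpow_le {a b r : ℝ} (ha : 0 < a) (h1 : a / 2 ≤ b) (h2 : b ≤ 2 * a) :
    b ^ r ≤ 2 ^ |r| * a ^ r := by
  rcases le_or_gt 0 r with hr | hr
  · calc b ^ r ≤ (2 * a) ^ r := Real.rpow_le_rpow (by linarith) h2 hr
      _ = 2 ^ r * a ^ r := Real.mul_rpow (by norm_num) ha.le
      _ ≤ 2 ^ |r| * a ^ r := by
          have h2r : (2:ℝ) ^ r ≤ 2 ^ |r| :=
            Real.rpow_le_rpow_of_exponent_le one_le_two (le_abs_self r)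
          exact mul_le_mul_of_nonneg_right h2r (Real.rpow_nonneg ha.le r)
  · calc b ^ r ≤ (a / 2) ^ r :=
          Real.rpow_le_rpow_of_nonpos (by positivity) h1 hr.le
      _ = 2 ^ (-r) * a ^ r := by
          rw [Real.div_rpow ha.le (by norm_num : (0:ℝ) ≤ 2), Real.rpow_neg (by norm_num)]
          ring
      _ = 2 ^ |r| * a ^ r := by rw [abs_of_neg hr]

lemma aux_rpow_ge {a b r : ℝ} (ha : 0 < a) (h1 : a / 2 ≤ b) (h2 : b ≤ 2 * a) :
    ((2:ℝ) ^ |r|)⁻¹ * a ^ r ≤ b ^ r := by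
  have hb : 0 < b := lt_of_lt_of_le (by positivity) h1
  have h := aux_rpow_le (a := b) (b := a) (r := r) hb (by linarith) (by linarith)
  have h2pos : (0:ℝ) < 2 ^ |r| := Real.rpow_pos_of_pos (by norm_num) _
  rw [inv_mul_le_iff₀ h2pos]
  exact h

lemma aux_coord_le {N : ℕ} (x : EuclideanSpace ℝ (Fin N)) (j : Fin N) :
    |x j| ≤ ‖x‖ := by
  rw [EuclideanSpace.norm_eq, ← Real.sqrt_sq_eq_abs]
  apply Real.sqrt_le_sqrt
  simpa [Real.norm_eq_abs, sq_abs] using Finset.single_le_sum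
    (f := fun i => ‖x i‖ ^ 2) (fun i _ => sq_nonneg _) (Finset.mem_univ j)

lemma aux_coord_le' {N : ℕ} (x : EuclideanSpace ℝ (Fin N)) (j : Fin N) :
    |x j| ≤ ‖x‖ := by
  rw [EuclideanSpace.norm_eq, ← Real.sqrt_sq_eq_abs]
  apply Real.sqrt_le_sqrt
  simpa [Real.norm_eq_abs, sq_abs] using Finset.single_le_sum
    (f := fun i => ‖x i‖ ^ 2) (fun i _ => sq_nonneg _) (Finset.mem_univ j)

lemma aux_integrableOn {N : ℕ} (j : Fin N) {α : ℝ} (hα : -1 < α) :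
    IntegrableOn (fun x : EuclideanSpace ℝ (Fin N) => (x j) ^ α)
      (Metric.ball 0 1 ∩ {x | 0 < x j}) volume := by
  classical
  set g : Fin N → ℝ → ℝ := fun i y =>
    if i = j then (Set.Ioo (0:ℝ) 1).indicator (fun y => y ^ α) y
    else (Set.Icc (-1:ℝ) 1).indicator (fun _ => (1:ℝ)) y with hg
  have hgnonneg : ∀ i y, 0 ≤ g i y := by
    intro i y
    by_cases h : i = j
    · simp only [hg, h, if_pos]
      exact Set.indicator_nonneg (fun y hy => Real.rpow_nonneg hy.1.le α) y
    · simp only [hg, h, if_neg, ite_false]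
      exact Set.indicator_nonneg (fun _ _ => zero_le_one) y
  have hgint : ∀ i, Integrable (g i) := by
    intro i
    by_cases h : i = j
    · simp only [hg, h, if_pos]
      have h1 : IntegrableOn (fun y : ℝ => y ^ α) (Set.Ioo 0 1) volume :=
        (intervalIntegral.intervalIntegrable_rpow' hα (a := 0) (b := 1)).1.mono_set Set.Ioo_subset_Ioc_self
      exact h1.integrable_indicator measurableSet_Ioo
    · simp only [hg, h, ite_false]
      have h1 : IntegrableOn (fun _ : ℝ => (1:ℝ)) (Set.Icc (-1) 1) volume :=
        integrableOn_const measure_Icc_lt_top.ne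
      exact h1.integrable_indicator measurableSet_Icc
  have hG : Integrable (fun x : Fin N → ℝ => ∏ i, g i (x i)) := Integrable.fintype_prod hgint
  have hGE : Integrable (fun x : EuclideanSpace ℝ (Fin N) => ∏ i, g i (x i)) := by
    exact ((EuclideanSpace.volume_preserving_symm_measurableEquiv_toLp (Fin N)).integrable_comp_emb
      (MeasurableEquiv.measurableEmbedding _)).mpr hG
  have hs : MeasurableSet (Metric.ball (0 : EuclideanSpace ℝ (Fin N)) 1 ∩ {x | 0 < x j}) :=
    measurableSet_ball.inter (measurableSet_lt measurable_const (by fun_prop))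
  rw [← integrable_indicator_iff hs]
  apply hGE.mono'
  · apply Measurable.aestronglyMeasurable
    apply Measurable.indicator _ hs
    fun_prop
  · filter_upwards with x
    by_cases hx : x ∈ Metric.ball (0 : EuclideanSpace ℝ (Fin N)) 1 ∩ {x | 0 < x j}
    · rw [Set.indicator_of_mem hx]
      have hx1 : ‖x‖ < 1 := by simpa [mem_ball_zero_iff] using hx.1
      have hx2 : 0 < x j := hx.2
      have hxj1 : x j < 1 := lt_of_le_of_lt ((le_abs_self _).trans (aux_coord_le' x j)) hx1
      have h1 : ∀ b ∈ Finset.univ, b ≠ j → g b (x b) = 1 := by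
        intro b _ hbj
        simp only [hg, if_neg hbj, ite_false]
        rw [Set.indicator_of_mem]
        have := (abs_le.mp ((aux_coord_le' x b).trans hx1.le))
        exact ⟨this.1, this.2⟩
      have hprod : ∏ i, g i (x i) = (x j) ^ α := by
        rw [Finset.prod_eq_single j h1 (by simp)]
        simp only [hg, if_pos rfl]
        rw [Set.indicator_of_mem (Set.mem_Ioo.mpr ⟨hx2, hxj1⟩)]
      rw [hprod, Real.norm_eq_abs, abs_of_nonneg (Real.rpow_nonneg hx2.le α)]
    · rw [Set.indicator_of_notMem hx, norm_zero]
      exact Finset.prod_nonneg fun i _ => hgnonneg i (x i)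

lemma aux_B_pos {N : ℕ} (j : Fin N) {α : ℝ} (hα : -1 < α) :
    0 < ∫ x in Metric.ball (0 : EuclideanSpace ℝ (Fin N)) 1 ∩ {x | 0 < x j}, (x j) ^ α := by
  have hs : MeasurableSet (Metric.ball (0 : EuclideanSpace ℝ (Fin N)) 1 ∩ {x | 0 < x j}) :=
    measurableSet_ball.inter (measurableSet_lt measurable_const (by fun_prop))
  have hsopen : IsOpen (Metric.ball (0 : EuclideanSpace ℝ (Fin N)) 1 ∩ {x | 0 < x j}) :=
    Metric.isOpen_ball.inter (isOpen_lt continuous_const (by fun_prop))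
  have hne : (Metric.ball (0 : EuclideanSpace ℝ (Fin N)) 1 ∩ {x | 0 < x j}).Nonempty := by
    refine ⟨EuclideanSpace.single j (1/2 : ℝ), ?_, ?_⟩
    · rw [mem_ball_zero_iff, EuclideanSpace.norm_single]
      norm_num
    · simp [EuclideanSpace.single_apply]
  rw [setIntegral_pos_iff_support_of_nonneg_ae ?_ (aux_integrableOn j hα)]
  · refine lt_of_lt_of_le (hsopen.measure_pos volume hne) (measure_mono ?_)
    intro x hx
    exact ⟨ne_of_gt (Real.rpow_pos_of_pos hx.2 α), hx⟩
  · rw [EventuallyLE, ae_restrict_iff' hs]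
    exact ae_of_all _ fun x hx => Real.rpow_nonneg hx.2.le α

variable {N : ℕ}

lemma aux_translate (μ : Measure (EuclideanSpace ℝ (Fin N))) [μ.IsAddRightInvariant]
    (v : EuclideanSpace ℝ (Fin N)) (s : Set (EuclideanSpace ℝ (Fin N)))
    (f : EuclideanSpace ℝ (Fin N) → ℝ) :
    ∫ x in s, f x ∂μ = ∫ y in (fun y => y + v) ⁻¹' s, f (y + v) ∂μ :=
  ((measurePreserving_add_right μ v).setIntegral_preimage_emb
    (MeasurableEquiv.measurableEmbedding (MeasurableEquiv.addRight v)) f s).symm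

lemma aux_pre_sphere {j : Fin N} (v : EuclideanSpace ℝ (Fin N)) (hvj : v j = 0) :
    (fun y : EuclideanSpace ℝ (Fin N) => y + v) ⁻¹'
        (Metric.sphere v 1 ∩ {x | 0 < x j}) =
      Metric.sphere (0 : EuclideanSpace ℝ (Fin N)) 1 ∩ {x | 0 < x j} := by
  ext y
  have hadd : (y + v) j = y j := by
    show y j + v j = y j
    rw [hvj, add_zero]
  simp [Set.mem_preimage, Set.mem_inter_iff, mem_sphere_iff_norm, mem_sphere_zero_iff_norm,
    add_sub_cancel_right, Set.mem_setOf_eq]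
  rw [show y j + v j = y j from by rw [hvj, add_zero]]
  tauto

lemma aux_pre_ball {j : Fin N} (v : EuclideanSpace ℝ (Fin N)) (hvj : v j = 0) :
    (fun y : EuclideanSpace ℝ (Fin N) => y + v) ⁻¹'
        (Metric.ball v 1 ∩ {x | 0 < x j}) =
      Metric.ball (0 : EuclideanSpace ℝ (Fin N)) 1 ∩ {x | 0 < x j} := by
  ext y
  have hadd : (y + v) j = y j := by
    show y j + v j = y j
    rw [hvj, add_zero]
  simp [Set.mem_preimage, Set.mem_inter_iff, Metric.mem_ball, dist_eq_norm,
    add_sub_cancel_right, Set.mem_setOf_eq, mem_ball_zero_iff]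
  rw [show y j + v j = y j from by rw [hvj, add_zero]]
  tauto
lemma aux_norm_window {N : ℕ} {t : ℝ} (ht : 2 ≤ t) {i0 : Fin N}
    (y : EuclideanSpace ℝ (Fin N)) (hy : ‖y‖ ≤ 1) :
    t / 2 ≤ ‖y + EuclideanSpace.single i0 t‖ ∧ ‖y + EuclideanSpace.single i0 t‖ ≤ 2 * t := by
  set v := EuclideanSpace.single i0 t with hv
  have hvnorm : ‖v‖ = t := by
    rw [hv, EuclideanSpace.norm_single, Real.norm_eq_abs, abs_of_pos (by linarith)]
  have h1 : ‖y + v‖ ≤ ‖y‖ + ‖v‖ := norm_add_le _ _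
  have h2 : ‖v‖ - ‖y‖ ≤ ‖y + v‖ := by
    have h3 : ‖v‖ ≤ ‖y + v‖ + ‖y‖ := by
      calc ‖v‖ = ‖(y + v) - y‖ := by congr 1; abel
        _ ≤ ‖y + v‖ + ‖y‖ := norm_sub_le _ _
    linarith
  rw [hvnorm] at h1 h2
  constructor <;> linarith

lemma aux_num {N : ℕ} {j i0 : Fin N} (hji : j ≠ i0) {k α t : ℝ} (ht : 2 ≤ t) :
    (∫ x in Metric.sphere (EuclideanSpace.single i0 t) 1 ∩
        {x : EuclideanSpace ℝ (Fin N) | 0 < x j},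
        ‖x‖ ^ k * (x j) ^ α ∂μH[(N:ℝ)-1])
      ≤ 2 ^ |k| * t ^ k *
        ∫ x in Metric.sphere (0 : EuclideanSpace ℝ (Fin N)) 1 ∩ {x | 0 < x j},
          (x j) ^ α ∂μH[(N:ℝ)-1] := by
  have ht0 : (0:ℝ) < t := by linarith
  set v := EuclideanSpace.single i0 t with hv
  have hvj : v j = 0 := by
    rw [hv, EuclideanSpace.single_apply, if_neg hji]
  set S₀ := Metric.sphere (0 : EuclideanSpace ℝ (Fin N)) 1 ∩ {x | 0 < x j} with hS₀
  have hS₀meas : MeasurableSet S₀ :=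
    Metric.isClosed_sphere.measurableSet.inter (measurableSet_lt measurable_const (by fun_prop))
  set A := ∫ x in S₀, (x j) ^ α ∂μH[(N:ℝ)-1] with hA
  have hA0 : 0 ≤ A :=
    setIntegral_nonneg hS₀meas fun x hx => Real.rpow_nonneg hx.2.le α
  have hCk : (0:ℝ) < 2 ^ |k| := Real.rpow_pos_of_pos (by norm_num) _
  -- translate
  rw [aux_translate μH[(N:ℝ)-1] v _ _, aux_pre_sphere v hvj]
  have hfun : (fun y : EuclideanSpace ℝ (Fin N) => ‖y + v‖ ^ k * ((y + v) j) ^ α)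
      = fun y => ‖y + v‖ ^ k * (y j) ^ α := by
    funext y
    rw [show (y + v) j = y j from by show y j + v j = y j; rw [hvj, add_zero]]
  rw [show (fun y : EuclideanSpace ℝ (Fin N) => ‖y + v‖ ^ k * ((y + v) j) ^ α)
      = fun y => ‖y + v‖ ^ k * (y j) ^ α from hfun]
  -- bounds on the window
  have hwin : ∀ y ∈ S₀, t / 2 ≤ ‖y + v‖ ∧ ‖y + v‖ ≤ 2 * t := by
    intro y hy
    exact aux_norm_window ht y (le_of_eq (mem_sphere_zero_iff_norm.mp hy.1))
  by_cases hint : Integrable (fun y => ‖y + v‖ ^ k * (y j) ^ α) (μH[(N:ℝ)-1].restrict S₀)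
  · have hgint : IntegrableOn (fun y : EuclideanSpace ℝ (Fin N) => (y j) ^ α) S₀ μH[(N:ℝ)-1] := by
      refine Integrable.mono' (hint.const_mul (((2 ^ |k|)⁻¹ * t ^ k)⁻¹)) ?_ ?_
      · exact (by fun_prop : Measurable fun y : EuclideanSpace ℝ (Fin N) => (y j) ^ α).aestronglyMeasurable
      · rw [ae_restrict_iff' hS₀meas]
        refine ae_of_all _ fun y hy => ?_
        obtain ⟨hb1, hb2⟩ := hwin y hy
        have hge : ((2:ℝ) ^ |k|)⁻¹ * t ^ k ≤ ‖y + v‖ ^ k := aux_rpow_ge ht0 hb1 hb2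
        have hyj : 0 ≤ (y j) ^ α := Real.rpow_nonneg hy.2.le α
        rw [Real.norm_eq_abs, abs_of_nonneg hyj]
        have hmpos : (0:ℝ) < (2 ^ |k|)⁻¹ * t ^ k := by positivity
        calc (y j) ^ α = ((2 ^ |k|)⁻¹ * t ^ k)⁻¹ * (((2 ^ |k|)⁻¹ * t ^ k) * (y j) ^ α) :=
              (inv_mul_cancel_left₀ hmpos.ne' _).symm
          _ ≤ ((2 ^ |k|)⁻¹ * t ^ k)⁻¹ * (‖y + v‖ ^ k * (y j) ^ α) :=
              mul_le_mul_of_nonneg_left (mul_le_mul_of_nonneg_right hge hyj) (by positivity)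
    calc (∫ y in S₀, ‖y + v‖ ^ k * (y j) ^ α ∂μH[(N:ℝ)-1])
        ≤ ∫ y in S₀, 2 ^ |k| * t ^ k * (y j) ^ α ∂μH[(N:ℝ)-1] := by
          refine setIntegral_mono_on hint (hgint.const_mul _) hS₀meas fun y hy => ?_
          obtain ⟨hb1, hb2⟩ := hwin y hy
          exact mul_le_mul_of_nonneg_right (aux_rpow_le ht0 hb1 hb2)
            (Real.rpow_nonneg hy.2.le α)
      _ = 2 ^ |k| * t ^ k * A := by rw [MeasureTheory.integral_const_mul]
  · rw [integral_undef hint]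
    positivity
lemma aux_den {N : ℕ} {j i0 : Fin N} (hji : j ≠ i0) {ℓ α t : ℝ} (hα : -1 < α) (ht : 2 ≤ t) :
    (((2:ℝ) ^ |ℓ|)⁻¹ * t ^ ℓ *
        ∫ x in Metric.ball (0 : EuclideanSpace ℝ (Fin N)) 1 ∩ {x | 0 < x j}, (x j) ^ α)
      ≤ (∫ x in Metric.ball (EuclideanSpace.single i0 t) 1 ∩
          {x : EuclideanSpace ℝ (Fin N) | 0 < x j}, ‖x‖ ^ ℓ * (x j) ^ α)
    ∧ (∫ x in Metric.ball (EuclideanSpace.single i0 t) 1 ∩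
          {x : EuclideanSpace ℝ (Fin N) | 0 < x j}, ‖x‖ ^ ℓ * (x j) ^ α)
      ≤ 2 ^ |ℓ| * t ^ ℓ *
        ∫ x in Metric.ball (0 : EuclideanSpace ℝ (Fin N)) 1 ∩ {x | 0 < x j}, (x j) ^ α := by
  have ht0 : (0:ℝ) < t := by linarith
  set v := EuclideanSpace.single i0 t with hv
  have hvj : v j = 0 := by
    rw [hv, EuclideanSpace.single_apply, if_neg hji]
  set B₀ := Metric.ball (0 : EuclideanSpace ℝ (Fin N)) 1 ∩ {x | 0 < x j} with hB₀
  have hB₀meas : MeasurableSet B₀ :=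
    measurableSet_ball.inter (measurableSet_lt measurable_const (by fun_prop))
  have hBint : IntegrableOn (fun x : EuclideanSpace ℝ (Fin N) => (x j) ^ α) B₀ volume :=
    aux_integrableOn j hα
  have hEq : (∫ x in Metric.ball v 1 ∩ {x : EuclideanSpace ℝ (Fin N) | 0 < x j},
      ‖x‖ ^ ℓ * (x j) ^ α) = ∫ y in B₀, ‖y + v‖ ^ ℓ * (y j) ^ α := by
    rw [aux_translate volume v _ (fun x => ‖x‖ ^ ℓ * (x j) ^ α), aux_pre_ball v hvj]
    rw [show (fun y : EuclideanSpace ℝ (Fin N) => ‖y + v‖ ^ ℓ * ((y + v) j) ^ α)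
        = fun y => ‖y + v‖ ^ ℓ * (y j) ^ α from by
      funext y
      rw [show (y + v) j = y j from by show y j + v j = y j; rw [hvj, add_zero]]]
  rw [hEq]
  have hwin : ∀ y ∈ B₀, t / 2 ≤ ‖y + v‖ ∧ ‖y + v‖ ≤ 2 * t := by
    intro y hy
    exact aux_norm_window ht y (le_of_lt (mem_ball_zero_iff.mp hy.1))
  have hfint : IntegrableOn (fun y : EuclideanSpace ℝ (Fin N) => ‖y + v‖ ^ ℓ * (y j) ^ α)
      B₀ volume := by
    refine Integrable.mono' (hBint.const_mul (2 ^ |ℓ| * t ^ ℓ)) ?_ ?_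
    · exact (by fun_prop :
        Measurable fun y : EuclideanSpace ℝ (Fin N) => ‖y + v‖ ^ ℓ * (y j) ^ α).aestronglyMeasurable
    · rw [ae_restrict_iff' hB₀meas]
      refine ae_of_all _ fun y hy => ?_
      obtain ⟨hb1, hb2⟩ := hwin y hy
      have hyj : 0 ≤ (y j) ^ α := Real.rpow_nonneg hy.2.le α
      rw [Real.norm_eq_abs, abs_of_nonneg (mul_nonneg (Real.rpow_nonneg (norm_nonneg _) ℓ) hyj)]
      exact mul_le_mul_of_nonneg_right (aux_rpow_le ht0 hb1 hb2) hyj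
  constructor
  · calc ((2:ℝ) ^ |ℓ|)⁻¹ * t ^ ℓ * ∫ x in B₀, (x j) ^ α
        = ∫ y in B₀, ((2:ℝ) ^ |ℓ|)⁻¹ * t ^ ℓ * (y j) ^ α := by
          rw [MeasureTheory.integral_const_mul]
      _ ≤ ∫ y in B₀, ‖y + v‖ ^ ℓ * (y j) ^ α := by
          refine setIntegral_mono_on (hBint.const_mul _) hfint hB₀meas fun y hy => ?_
          obtain ⟨hb1, hb2⟩ := hwin y hy
          exact mul_le_mul_of_nonneg_right (aux_rpow_ge ht0 hb1 hb2)
            (Real.rpow_nonneg hy.2.le α)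
  · calc (∫ y in B₀, ‖y + v‖ ^ ℓ * (y j) ^ α)
        ≤ ∫ y in B₀, 2 ^ |ℓ| * t ^ ℓ * (y j) ^ α := by
          refine setIntegral_mono_on hfint (hBint.const_mul _) hB₀meas fun y hy => ?_
          obtain ⟨hb1, hb2⟩ := hwin y hy
          exact mul_le_mul_of_nonneg_right (aux_rpow_le ht0 hb1 hb2)
            (Real.rpow_nonneg hy.2.le α)
      _ = 2 ^ |ℓ| * t ^ ℓ * ∫ x in B₀, (x j) ^ α := by
          rw [MeasureTheory.integral_const_mul]

/-- For `N ≥ 2`, `α ∈ (-1,0)`: if `k(N+α) < ℓ(N+α-1)` (and `ℓ+N+α > 0`, `k+N+α > 0`),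
then the weighted isoperimetric ratio of the unit balls `Ω(t) = B₁((t,0,…,0))` centered
on the `x₁`-axis tends to `0` as `t → +∞`; hence `k(N+α) ≥ ℓ(N+α-1)` is necessary for
existence of a minimizer. -/
theorem stmt_18 (N : ℕ) (hN : 2 ≤ N) (k ℓ α : ℝ) (hα : α ∈ Set.Ioo (-1 : ℝ) 0)
    (hl : 0 < ℓ + N + α) (hk : 0 < k + N + α)
    (hcond : k * ((N : ℝ) + α) < ℓ * ((N : ℝ) + α - 1))
    (c : ℝ → EuclideanSpace ℝ (Fin N))
    (hc : ∀ t, c t = EuclideanSpace.single (⟨0, by omega⟩ : Fin N) t)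
    (R : ℝ → ℝ)
    (hR : ∀ t, R t =
      (∫ x in Metric.sphere (c t) 1 ∩ {x : EuclideanSpace ℝ (Fin N) |
          0 < x (⟨N - 1, by omega⟩ : Fin N)},
        ‖x‖ ^ k * (x (⟨N - 1, by omega⟩ : Fin N)) ^ α ∂μH[(N : ℝ) - 1]) /
      (∫ x in Metric.ball (c t) 1 ∩ {x : EuclideanSpace ℝ (Fin N) |
          0 < x (⟨N - 1, by omega⟩ : Fin N)},
        ‖x‖ ^ ℓ * (x (⟨N - 1, by omega⟩ : Fin N)) ^ α) ^ ((k + N + α - 1) / (ℓ + N + α))) :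
    Tendsto R atTop (𝓝 0) := by
  obtain ⟨hα1, hα2⟩ := hα
  have hj' : N - 1 < N := by omega
  have hi' : 0 < N := by omega
  set j : Fin N := ⟨N - 1, hj'⟩ with hjdef
  set i0 : Fin N := ⟨0, hi'⟩ with hi0def
  have hji : j ≠ i0 := by
    intro h
    have := congrArg Fin.val h
    simp only [hjdef, hi0def] at this
    omega
  set q : ℝ := (k + N + α - 1) / (ℓ + N + α) with hqdef
  -- exponent is negative
  have hexp : k - ℓ * q < 0 := by
    have h1 : k * (ℓ + N + α) - ℓ * (k + N + α - 1) = k * (N + α) - ℓ * (N + α - 1) := by ring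
    have h2 : k < ℓ * q := by
      rw [hqdef, ← mul_div_assoc, lt_div_iff₀ hl]
      nlinarith [hcond, h1]
    linarith
  -- constants
  set A : ℝ := ∫ x in Metric.sphere (0 : EuclideanSpace ℝ (Fin N)) 1 ∩ {x | 0 < x j},
      (x j) ^ α ∂μH[(N:ℝ)-1] with hAdef
  set B : ℝ := ∫ x in Metric.ball (0 : EuclideanSpace ℝ (Fin N)) 1 ∩ {x | 0 < x j},
      (x j) ^ α with hBdef
  have hA0 : 0 ≤ A :=
    setIntegral_nonneg
      (Metric.isClosed_sphere.measurableSet.inter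
        (measurableSet_lt measurable_const (by fun_prop)))
      fun x hx => Real.rpow_nonneg hx.2.le α
  have hB0 : 0 < B := aux_B_pos j hα1
  have hClpos : (0:ℝ) < 2 ^ |ℓ| := Real.rpow_pos_of_pos (by norm_num) _
  set c₃ : ℝ := min ((((2:ℝ) ^ |ℓ|)⁻¹ * B) ^ q) (((2:ℝ) ^ |ℓ| * B) ^ q) with hc₃def
  have hc₃pos : 0 < c₃ :=
    lt_min (Real.rpow_pos_of_pos (by positivity) q) (Real.rpow_pos_of_pos (by positivity) q)
  set K : ℝ := 2 ^ |k| * A / c₃ with hKdef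
  have hK0 : 0 ≤ K := by positivity
  -- key bound
  have key : ∀ t : ℝ, 2 ≤ t → 0 ≤ R t ∧ R t ≤ K * t ^ (k - ℓ * q) := by
    intro t ht
    have ht0 : (0:ℝ) < t := by linarith
    have hden := aux_den (j := j) (i0 := i0) hji hα1 (ℓ := ℓ) ht
    have hDlb : ((2:ℝ) ^ |ℓ|)⁻¹ * t ^ ℓ * B ≤
        ∫ x in Metric.ball (EuclideanSpace.single i0 t) 1 ∩
          {x : EuclideanSpace ℝ (Fin N) | 0 < x j}, ‖x‖ ^ ℓ * (x j) ^ α := hden.1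
    have hDub : (∫ x in Metric.ball (EuclideanSpace.single i0 t) 1 ∩
          {x : EuclideanSpace ℝ (Fin N) | 0 < x j}, ‖x‖ ^ ℓ * (x j) ^ α) ≤
        (2:ℝ) ^ |ℓ| * t ^ ℓ * B := hden.2
    set D : ℝ := ∫ x in Metric.ball (EuclideanSpace.single i0 t) 1 ∩
          {x : EuclideanSpace ℝ (Fin N) | 0 < x j}, ‖x‖ ^ ℓ * (x j) ^ α with hDdef
    have hDpos : 0 < D := lt_of_lt_of_le (by positivity) hDlb
    have hnum_le := aux_num (j := j) (i0 := i0) hji (k := k) (α := α) ht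
    have hnum0 : 0 ≤ ∫ x in Metric.sphere (EuclideanSpace.single i0 t) 1 ∩
        {x : EuclideanSpace ℝ (Fin N) | 0 < x j},
        ‖x‖ ^ k * (x j) ^ α ∂μH[(N:ℝ)-1] :=
      setIntegral_nonneg
        (Metric.isClosed_sphere.measurableSet.inter
          (measurableSet_lt measurable_const (by fun_prop)))
        fun x hx => mul_nonneg (Real.rpow_nonneg (norm_nonneg _) k)
          (Real.rpow_nonneg hx.2.le α)
    have hDq : c₃ * t ^ (ℓ * q) ≤ D ^ q := by
      rcases le_or_gt 0 q with hq0 | hq0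
      · calc c₃ * t ^ (ℓ * q) ≤ (((2:ℝ) ^ |ℓ|)⁻¹ * B) ^ q * t ^ (ℓ * q) :=
              mul_le_mul_of_nonneg_right (min_le_left _ _) (Real.rpow_nonneg ht0.le _)
          _ = ((((2:ℝ) ^ |ℓ|)⁻¹ * B) * t ^ ℓ) ^ q := by
              rw [Real.mul_rpow (by positivity) (Real.rpow_nonneg ht0.le _),
                Real.rpow_mul ht0.le]
          _ ≤ D ^ q := by
              apply Real.rpow_le_rpow (by positivity) _ hq0
              calc ((2:ℝ) ^ |ℓ|)⁻¹ * B * t ^ ℓ = ((2:ℝ) ^ |ℓ|)⁻¹ * t ^ ℓ * B := by ring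
                _ ≤ D := hDlb
      · calc c₃ * t ^ (ℓ * q) ≤ ((2:ℝ) ^ |ℓ| * B) ^ q * t ^ (ℓ * q) :=
              mul_le_mul_of_nonneg_right (min_le_right _ _) (Real.rpow_nonneg ht0.le _)
          _ = (((2:ℝ) ^ |ℓ| * B) * t ^ ℓ) ^ q := by
              rw [Real.mul_rpow (by positivity) (Real.rpow_nonneg ht0.le _),
                Real.rpow_mul ht0.le]
          _ ≤ D ^ q := by
              apply Real.rpow_le_rpow_of_nonpos hDpos _ hq0.le
              calc D ≤ (2:ℝ) ^ |ℓ| * t ^ ℓ * B := hDub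
                _ = (2:ℝ) ^ |ℓ| * B * t ^ ℓ := by ring
    have hDqpos : 0 < D ^ q := Real.rpow_pos_of_pos hDpos q
    constructor
    · rw [hR t, hc t]
      exact div_nonneg hnum0 hDqpos.le
    · rw [hR t, hc t]
      calc (∫ x in Metric.sphere (EuclideanSpace.single i0 t) 1 ∩
            {x : EuclideanSpace ℝ (Fin N) | 0 < x j},
            ‖x‖ ^ k * (x j) ^ α ∂μH[(N:ℝ)-1]) / D ^ q
          ≤ (2 ^ |k| * t ^ k * A) / (c₃ * t ^ (ℓ * q)) :=
            div_le_div₀ (by positivity) hnum_le (by positivity) hDq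
        _ = K * t ^ (k - ℓ * q) := by
            rw [Real.rpow_sub ht0, hKdef]
            field_simp
  -- conclude
  have hlim : Tendsto (fun t : ℝ => K * t ^ (k - ℓ * q)) atTop (𝓝 0) := by
    have h := tendsto_rpow_neg_atTop (by linarith : (0:ℝ) < -(k - ℓ * q))
    simp only [neg_neg] at h
    simpa using h.const_mul K
  refine squeeze_zero' ?_ ?_ hlim
  · exact (eventually_ge_atTop 2).mono fun t ht => (key t ht).1
  · exact (eventually_ge_atTop 2).mono fun t ht => (key t ht).2
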